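/- In the constrained zero-sum jamming game where the jammer's payoff matrix has row i (power level J_i) dominated by row n (maximum power J_n), the jammer's optimal strategy under the constraint ∑ y_j J_j ≤ J_ave (with 0 ≤ J_ave ≤ J_n) is to play J_n with probability p = J_ave/J_n and J_0 = 0 with probability 1 - p, yielding expected payoff J_ave/J_n. -/

import Mathlib

open Finset

lemma least_key (n : ℕ) (hn : 0 < n) (y : Fin (n + 1) → ℝ) (hy : ∀ j, 0 ≤ y j) :
    IsLeast {s : ℝ | ∃ x : Fin n → ℝ, (∀ i, 0 ≤ x i) ∧ (∑ i, x i = 1) ∧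
      s = ∑ i : Fin n, ∑ j : Fin (n+1), x i * (if (i : ℕ) < (j : ℕ) then (1 : ℝ) else 0) * y j}
      (y (Fin.last n)) := by
  constructor
  · -- membership: x = indicator of last row
    refine ⟨fun i => if (i : ℕ) = n - 1 then 1 else 0, ?_, ?_, ?_⟩
    · intro i; by_cases h : (i : ℕ) = n - 1 <;> simp [h]
    · have hlt : n - 1 < n := Nat.sub_lt hn one_pos
      rw [Finset.sum_eq_single (⟨n - 1, hlt⟩ : Fin n)]
      · simp
      · intro b _ hb
        have : (b : ℕ) ≠ n - 1 := fun h => hb (Fin.ext h)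
        simp [this]
      · simp
    · have hlt : n - 1 < n := Nat.sub_lt hn one_pos
      rw [Finset.sum_eq_single (⟨n - 1, hlt⟩ : Fin n)]
      · simp only [if_pos rfl, one_mul]
        rw [Finset.sum_eq_single (Fin.last n)]
        · simp [Fin.val_last, hlt]
        · intro b _ hb
          have hb' : (b : ℕ) < n := by
            have := b.isLt
            rcases Nat.lt_succ_iff_lt_or_eq.mp this with h | h
            · exact h
            · exact absurd (Fin.ext (h.trans (Fin.val_last n).symm)) hb
          have : ¬ (n - 1 < (b : ℕ)) := by omega
          simp [this]
        · simp
      · intro b _ hb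
        have hbn : (b : ℕ) ≠ n - 1 := fun h => hb (Fin.ext h)
        simp [hbn]
      · simp
  · -- lower bound
    rintro s ⟨x, hx0, hx1, rfl⟩
    calc y (Fin.last n) = ∑ i : Fin n, x i * y (Fin.last n) := by
          rw [← Finset.sum_mul, hx1, one_mul]
      _ ≤ ∑ i : Fin n, ∑ j : Fin (n+1), x i * (if (i : ℕ) < (j : ℕ) then (1 : ℝ) else 0) * y j := by
          apply Finset.sum_le_sum
          intro i _
          calc x i * y (Fin.last n)
              = x i * (if (i : ℕ) < ((Fin.last n : Fin (n+1)) : ℕ) then (1:ℝ) else 0) * y (Fin.last n) := by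
                simp [Fin.val_last, i.isLt]
            _ ≤ ∑ j : Fin (n+1), x i * (if (i : ℕ) < (j : ℕ) then (1 : ℝ) else 0) * y j := by
                apply Finset.single_le_sum (f := fun j : Fin (n+1) =>
                  x i * (if (i : ℕ) < (j : ℕ) then (1 : ℝ) else 0) * y j)
                · intro j _
                  by_cases h : (i : ℕ) < (j : ℕ) <;>
                    simp [h, mul_nonneg, hx0 i, hy j]
                · exact Finset.mem_univ _

theorem constrained_zero_sum_maxmin_value (n : ℕ) (hn : 0 < n)
    (J : Fin (n + 1) → ℝ) (hJ0 : J 0 = 0) (hJmono : StrictMono J)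
    (Jave : ℝ) (hJave0 : 0 ≤ Jave) (hJaven : Jave ≤ J (Fin.last n)) :
    IsGreatest
      {t : ℝ | ∃ y : Fin (n + 1) → ℝ,
        (∀ j, 0 ≤ y j) ∧ (∑ j, y j = 1) ∧ (∑ j, J j * y j ≤ Jave) ∧
        IsGLB {s : ℝ | ∃ x : Fin n → ℝ, (∀ i, 0 ≤ x i) ∧ (∑ i, x i = 1) ∧
          s = ∑ i : Fin n, ∑ j : Fin (n+1), x i * (if (i : ℕ) < (j : ℕ) then (1 : ℝ) else 0) * y j} t}
      (Jave / J (Fin.last n)) := by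
  have hlast0 : (0 : Fin (n+1)) < Fin.last n := by
    rw [Fin.lt_def]; simpa using hn
  have hJn : 0 < J (Fin.last n) := hJ0 ▸ hJmono hlast0
  set p := Jave / J (Fin.last n) with hp
  have hp0 : 0 ≤ p := div_nonneg hJave0 hJn.le
  have hp1 : p ≤ 1 := (div_le_one hJn).mpr hJaven
  have hne : Fin.last n ≠ (0 : Fin (n+1)) := hlast0.ne'
  constructor
  · refine ⟨fun j => (if j = 0 then 1 - p else 0) + (if j = Fin.last n then p else 0),
      ?_, ?_, ?_, ?_⟩
    · intro j
      show (0:ℝ) ≤ (if j = 0 then 1 - p else 0) + (if j = Fin.last n then p else 0)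
      have h1 : (0:ℝ) ≤ if j = 0 then 1 - p else 0 := by
        split <;> simp [hp1] <;> linarith
      have h2 : (0:ℝ) ≤ if j = Fin.last n then p else 0 := by split <;> simp [hp0]
      linarith
    · rw [Finset.sum_add_distrib, Finset.sum_ite_eq' Finset.univ (0 : Fin (n+1)),
        Finset.sum_ite_eq' Finset.univ (Fin.last n)]
      simp
    · have : ∀ j : Fin (n+1), J j * ((if j = 0 then 1 - p else 0) + (if j = Fin.last n then p else 0))
          = (if j = 0 then J j * (1 - p) else 0) + (if j = Fin.last n then J j * p else 0) := by
        intro j; split <;> split <;> ring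
      rw [Finset.sum_congr rfl (fun j _ => this j), Finset.sum_add_distrib,
        Finset.sum_ite_eq' Finset.univ (0 : Fin (n+1)), Finset.sum_ite_eq' Finset.univ (Fin.last n)]
      simp [hJ0, hp]
      rw [mul_div_cancel₀ _ hJn.ne']
    · have h := least_key n hn
        (fun j => (if j = 0 then 1 - p else 0) + (if j = Fin.last n then p else 0))
        (by intro j
            show (0:ℝ) ≤ (if j = 0 then 1 - p else 0) + (if j = Fin.last n then p else 0)
            have h1 : (0:ℝ) ≤ if j = 0 then 1 - p else 0 := by
              split <;> simp [hp1] <;> linarith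
            have h2 : (0:ℝ) ≤ if j = Fin.last n then p else 0 := by split <;> simp [hp0]
            linarith)
      have h2 := h.isGLB
      rw [show ((if Fin.last n = (0 : Fin (n+1)) then 1 - p else 0) +
          (if Fin.last n = Fin.last n then p else 0)) = p
        from by simp [hne]] at h2
      exact h2
  · rintro t ⟨y, hy0, hy1, hyJ, hglb⟩
    have h := (least_key n hn y hy0).isGLB
    have ht : t = y (Fin.last n) := hglb.unique h
    have hterm : J (Fin.last n) * y (Fin.last n) ≤ ∑ j, J j * y j := by
      apply Finset.single_le_sum (f := fun j => J j * y j)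
      · intro j _
        exact mul_nonneg (hJ0 ▸ (hJmono.monotone (Fin.zero_le j))) (hy0 j)
      · exact Finset.mem_univ _
    rw [ht, hp, le_div_iff₀ hJn]
    linarith
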